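/- (Lemma 2.1, second inequality.) Let X ⊆ {0,1}^n be finite and nonempty and let 0 ≤ α₁ ≤ α₂ ≤ 1/2. Let (x₂*, y₂*) ∈ X × X be a minimizer over X × X of the function (x,y) ↦ g(x,y,α₂) + (α₁ − α₂)·overline∂g(x,y). Then for all α ∈ [α₁, α₂], h(α) ≥ h(α₂) + (α − α₂)·overline∂g(x₂*, y₂*). -/

import Mathlib

/-- `‖v‖^(Γ)`: the maximum over subsets `S` of cardinality `Γ` of `Σ_{i∈S} v i`. -/
noncomputable def gammaNorm (n : ℕ) (Γ : ℕ) (v : Fin n → ℝ) : ℝ :=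
  sSup {s : ℝ | ∃ S : Finset (Fin n), S.card = Γ ∧ s = ∑ i ∈ S, v i}

/-- The function `g(x,y,α)` from the k = 2 reformulation. -/
noncomputable def g (n : ℕ) (Γn : ℕ) (chat d : Fin n → ℝ) (x y : Fin n → ℝ) (α : ℝ) : ℝ :=
  α * ∑ i, chat i * x i + (1 - α) * ∑ i, chat i * y i +
    gammaNorm n Γn (fun i => d i * (α * x i + (1 - α) * y i))

/-- `h(α) = min_{x,y ∈ X} g(x,y,α)`. -/
noncomputable def hfun (n : ℕ) (Γn : ℕ) (chat d : Fin n → ℝ)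
    (X : Finset (Fin n → ℝ)) (α : ℝ) : ℝ :=
  sInf {w : ℝ | ∃ x ∈ X, ∃ y ∈ X, w = g n Γn chat d x y α}

/-- `overline∂g(x,y) = Σ ĉ_i x_i − Σ ĉ_i y_i + ‖(d_i x_i)_i‖^(Γ)`. -/
noncomputable def upg (n : ℕ) (Γn : ℕ) (chat d : Fin n → ℝ) (x y : Fin n → ℝ) : ℝ :=
  (∑ i, chat i * x i) - (∑ i, chat i * y i) + gammaNorm n Γn (fun i => d i * x i)

lemma gnSet_finite (n Γ : ℕ) (v : Fin n → ℝ) :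
    {s : ℝ | ∃ S : Finset (Fin n), S.card = Γ ∧ s = ∑ i ∈ S, v i}.Finite := by
  have hsub : {s : ℝ | ∃ S : Finset (Fin n), S.card = Γ ∧ s = ∑ i ∈ S, v i}
      ⊆ (fun S : Finset (Fin n) => ∑ i ∈ S, v i) '' Set.univ := by
    rintro s ⟨S, _, rfl⟩; exact ⟨S, trivial, rfl⟩
  exact (Set.finite_univ.image _).subset hsub

lemma gnSet_nonempty (n Γ : ℕ) (hΓ : Γ ≤ n) (v : Fin n → ℝ) :
    {s : ℝ | ∃ S : Finset (Fin n), S.card = Γ ∧ s = ∑ i ∈ S, v i}.Nonempty := by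
  obtain ⟨S, _, hcard⟩ := Finset.exists_subset_card_eq (s := (Finset.univ : Finset (Fin n))) (n := Γ)
    (by simpa using hΓ)
  exact ⟨_, S, hcard, rfl⟩

lemma le_gammaNorm (n Γ : ℕ) (v : Fin n → ℝ) (S : Finset (Fin n)) (hS : S.card = Γ) :
    ∑ i ∈ S, v i ≤ gammaNorm n Γ v :=
  le_csSup ((gnSet_finite n Γ v).bddAbove) ⟨S, hS, rfl⟩

lemma gammaNorm_le (n Γ : ℕ) (hΓ : Γ ≤ n) (v : Fin n → ℝ) (b : ℝ)
    (hb : ∀ S : Finset (Fin n), S.card = Γ → ∑ i ∈ S, v i ≤ b) :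
    gammaNorm n Γ v ≤ b := by
  apply csSup_le (gnSet_nonempty n Γ hΓ v)
  rintro s ⟨S, hS, rfl⟩; exact hb S hS

lemma gn_key (n Γ : ℕ) (hΓ : Γ ≤ n) (d x y : Fin n → ℝ)
    (hd : ∀ i, 0 ≤ d i) (hy : ∀ i, 0 ≤ y i) (α β : ℝ) (hab : α ≤ β) :
    gammaNorm n Γ (fun i => d i * (β * x i + (1 - β) * y i)) ≤
      gammaNorm n Γ (fun i => d i * (α * x i + (1 - α) * y i)) +
        (β - α) * gammaNorm n Γ (fun i => d i * x i) := by
  apply gammaNorm_le n Γ hΓ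
  intro S hS
  have h1 := le_gammaNorm n Γ (fun i => d i * (α * x i + (1 - α) * y i)) S hS
  have h2 := le_gammaNorm n Γ (fun i => d i * x i) S hS
  have h3 : ∑ i ∈ S, d i * (β * x i + (1 - β) * y i)
      = ∑ i ∈ S, d i * (α * x i + (1 - α) * y i)
        + (β - α) * ∑ i ∈ S, (d i * x i - d i * y i) := by
    rw [Finset.mul_sum, ← Finset.sum_add_distrib]
    apply Finset.sum_congr rfl; intro i _; ring
  have h4 : ∑ i ∈ S, (d i * x i - d i * y i) ≤ ∑ i ∈ S, d i * x i := by
    apply Finset.sum_le_sum; intro i _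
    nlinarith [hd i, hy i]
  have h5 : (β - α) * ∑ i ∈ S, (d i * x i - d i * y i)
      ≤ (β - α) * gammaNorm n Γ (fun i => d i * x i) :=
    mul_le_mul_of_nonneg_left (h4.trans h2) (by linarith)
  simp only [h3]
  linarith

lemma g_lower (n Γ : ℕ) (hΓ : Γ ≤ n) (chat d x y : Fin n → ℝ)
    (hd : ∀ i, 0 ≤ d i) (hy : ∀ i, 0 ≤ y i) (α β : ℝ) (hab : α ≤ β) :
    g n Γ chat d x y β + (α - β) * upg n Γ chat d x y ≤ g n Γ chat d x y α := by
  have key := gn_key n Γ hΓ d x y hd hy α β hab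
  simp only [g, upg]
  nlinarith [key]

lemma hSet_finite (n Γn : ℕ) (chat d : Fin n → ℝ) (X : Finset (Fin n → ℝ)) (α : ℝ) :
    {w : ℝ | ∃ x ∈ X, ∃ y ∈ X, w = g n Γn chat d x y α}.Finite := by
  have hsub : {w : ℝ | ∃ x ∈ X, ∃ y ∈ X, w = g n Γn chat d x y α}
      ⊆ (fun p : (Fin n → ℝ) × (Fin n → ℝ) => g n Γn chat d p.1 p.2 α) ''
          ((X : Set (Fin n → ℝ)) ×ˢ (X : Set (Fin n → ℝ))) := by
    rintro w ⟨x, hx, y, hy, rfl⟩; exact ⟨(x, y), ⟨hx, hy⟩, rfl⟩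
  exact ((X.finite_toSet.prod X.finite_toSet).image _).subset hsub

lemma hfun_le (n Γn : ℕ) (chat d : Fin n → ℝ) (X : Finset (Fin n → ℝ)) (α : ℝ)
    (x y : Fin n → ℝ) (hx : x ∈ X) (hy : y ∈ X) :
    hfun n Γn chat d X α ≤ g n Γn chat d x y α :=
  csInf_le (hSet_finite n Γn chat d X α).bddBelow ⟨x, hx, y, hy, rfl⟩

/-- Lemma 2.1, second inequality. -/
theorem stmt13 (n : ℕ) (hn : 1 ≤ n) (chat d : Fin n → ℝ) (hd : ∀ i, 0 ≤ d i)
    (Γ : ℕ) (hΓ : Γ ≤ n)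
    (X : Finset (Fin n → ℝ)) (hXne : X.Nonempty)
    (hX01 : ∀ x ∈ X, ∀ i, x i = 0 ∨ x i = 1)
    (α₁ α₂ : ℝ) (h0 : 0 ≤ α₁) (h12 : α₁ ≤ α₂) (h2 : α₂ ≤ 1 / 2)
    (x₂ y₂ : Fin n → ℝ) (hx₂ : x₂ ∈ X) (hy₂ : y₂ ∈ X)
    (hmin : ∀ x ∈ X, ∀ y ∈ X,
      g n Γ chat d x₂ y₂ α₂ + (α₁ - α₂) * upg n Γ chat d x₂ y₂
        ≤ g n Γ chat d x y α₂ + (α₁ - α₂) * upg n Γ chat d x y) :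
    ∀ α ∈ Set.Icc α₁ α₂,
      hfun n Γ chat d X α
        ≥ hfun n Γ chat d X α₂ + (α - α₂) * upg n Γ chat d x₂ y₂ := by
  intro α hα
  obtain ⟨hα1, hα2⟩ := hα
  obtain ⟨x₀, hx₀⟩ := hXne
  simp only [ge_iff_le, hfun]
  refine le_csInf ⟨g n Γ chat d x₀ x₀ α, x₀, hx₀, x₀, hx₀, rfl⟩ ?_
  rintro w ⟨x, hx, y, hy, rfl⟩
  have hy0 : ∀ i, 0 ≤ y i := fun i => by rcases hX01 y hy i with h | h <;> rw [h] <;> norm_num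
  have hstep : g n Γ chat d x y α₂ + (α - α₂) * upg n Γ chat d x y ≤ g n Γ chat d x y α :=
    g_lower n Γ hΓ chat d x y hd hy0 α α₂ hα2
  have hA : hfun n Γ chat d X α₂ ≤ g n Γ chat d x y α₂ := hfun_le n Γ chat d X α₂ x y hx hy
  have hB : hfun n Γ chat d X α₂ ≤ g n Γ chat d x₂ y₂ α₂ :=
    hfun_le n Γ chat d X α₂ x₂ y₂ hx₂ hy₂
  have hm := hmin x hx y hy
  simp only [hfun] at hA hB
  -- show: hfun α₂ + (α - α₂) * u₂ ≤ g x y α₂ + (α - α₂) * u, then chain with hstep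
  rcases eq_or_lt_of_le h12 with heq | hlt
  · have : α = α₂ := le_antisymm hα2 (heq ▸ hα1)
    rw [this]
    simpa using hA.trans (by linarith [hstep, this ▸ hstep])
  · set t : ℝ := (α₂ - α) / (α₂ - α₁) with ht
    have hBpos : 0 < α₂ - α₁ := by linarith
    have ht0 : 0 ≤ t := div_nonneg (by linarith) (by linarith)
    have ht1 : t ≤ 1 := (div_le_one hBpos).2 (by linarith)
    have htB : t * (α₁ - α₂) = α - α₂ := by
      rw [ht, div_mul_eq_mul_div, div_eq_iff hBpos.ne']
      ring
    have h3 := mul_le_mul_of_nonneg_left hm ht0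
    nlinarith [h3, hA, hB, hstep, htB, mul_le_mul_of_nonneg_left hB ht0]
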